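/- There exists a constant C₁ > 0 such that for every M > 0 there exists a constant C₂ > 0 with the following property. Let F̃ : [0,1]² → ℝ be continuous with F̃(1/2,1/2) ≥ 0, and let w : [0,1]² → ℝ be continuous on [0,1]², twice continuously differentiable on (0,1)², satisfy −(∂_x² w + ∂_y² w) = F̃ on (0,1)² and w = 0 on the boundary of [0,1]², and assume the partial derivatives of w up to order three extend continuously to [0,1]² and the pure fourth-order partial derivatives ∂_x⁴ w and ∂_y⁴ w exist on (0,1)² with |∂_x⁴ w| + |∂_y⁴ w| ≤ M there. Let N ≥ 4 be an even integer with h = 1/N, and let W̃ : {0,…,N}² → ℝ satisfy −(δ_x² W̃ + δ_y² W̃)_{ij} = γ_{ij}·F̃(x_i,y_j) for all i,j ∈ {1,…,N−1}, with W̃_{ij} = 0 whenever i or j lies in {0,N}. Then w(1/2,1/2) − W̃_{N/2,N/2} ≥ C₁·h²·(ln N)·F̃(1/2,1/2) − C₂·h². -/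

import Mathlib

open Real Set

noncomputable section

/-- The closed unit square `[0,1]²`. -/
def unitSq : Set (ℝ × ℝ) := Icc 0 1 ×ˢ Icc 0 1

/-- The open unit square `(0,1)²`. -/
def unitOSq : Set (ℝ × ℝ) := Ioo 0 1 ×ˢ Ioo 0 1

/-- The `L∞([0,1]²)` norm of `F`. -/
def supNorm (F : ℝ × ℝ → ℝ) : ℝ := sSup ((fun p => |F p|) '' unitSq)

/-- Pure second partial derivative `∂_x² w` at `p`. -/
def pdx2 (w : ℝ × ℝ → ℝ) (p : ℝ × ℝ) : ℝ := deriv (deriv (fun x => w (x, p.2))) p.1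

/-- Pure second partial derivative `∂_y² w` at `p`. -/
def pdy2 (w : ℝ × ℝ → ℝ) (p : ℝ × ℝ) : ℝ := deriv (deriv (fun y => w (p.1, y))) p.2

/-- `p` lies on the boundary of the unit square. -/
def OnBdry (p : ℝ × ℝ) : Prop := p.1 = 0 ∨ p.1 = 1 ∨ p.2 = 0 ∨ p.2 = 1

/-- `w` solves the Dirichlet problem (5): `-Δw + π² w = F` in `(0,1)²`, `w = 0` on the
boundary, with `w` continuous on `[0,1]²` and twice continuously differentiable inside. -/
def SolvesP5 (F w : ℝ × ℝ → ℝ) : Prop :=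
  ContinuousOn w unitSq ∧ ContDiffOn ℝ 2 w unitOSq ∧
    (∀ p ∈ unitOSq, -(pdx2 w p + pdy2 w p) + π ^ 2 * w p = F p) ∧
    (∀ p ∈ unitSq, OnBdry p → w p = 0)

/-- The weights `γ_{ij}`: `2/3` if `i = j = N/2`, and `1` otherwise. -/
def gam (N i j : ℕ) : ℝ := if i = N / 2 ∧ j = N / 2 then 2 / 3 else 1

/-- Second difference in `x` on the grid of step `h = 1/N`. -/
def dx2 (N : ℕ) (V : ℕ → ℕ → ℝ) (i j : ℕ) : ℝ :=
  (V (i + 1) j - 2 * V i j + V (i - 1) j) / ((N : ℝ)⁻¹ ^ 2)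

/-- Second difference in `y` on the grid of step `h = 1/N`. -/
def dy2 (N : ℕ) (V : ℕ → ℕ → ℝ) (i j : ℕ) : ℝ :=
  (V i (j + 1) - 2 * V i j + V i (j - 1)) / ((N : ℝ)⁻¹ ^ 2)

/-- `W` solves the two-dimensional scheme (7). -/
def Scheme2d (N : ℕ) (F : ℝ × ℝ → ℝ) (W : ℕ → ℕ → ℝ) : Prop :=
  (∀ i j, 0 < i → i < N → 0 < j → j < N →
    -(dx2 N W i j + dy2 N W i j) + gam N i j * π ^ 2 * W i j
      = gam N i j * F ((i : ℝ) / N, (j : ℝ) / N)) ∧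
  (∀ i j, i ≤ N → j ≤ N → (i = 0 ∨ i = N ∨ j = 0 ∨ j = N) → W i j = 0)

/-- Regularity: third-order smoothness up to the boundary of the square and pure
fourth-order partial derivatives in `x` and `y` existing inside, with
`|∂_x⁴ w| + |∂_y⁴ w| ≤ M` there. -/
def Reg4 (w : ℝ × ℝ → ℝ) (M : ℝ) : Prop :=
  ContDiffOn ℝ 3 w unitSq ∧
    ∀ p ∈ unitOSq,
      (∀ k < 4, DifferentiableAt ℝ (deriv^[k] fun x => w (x, p.2)) p.1) ∧
      (∀ k < 4, DifferentiableAt ℝ (deriv^[k] fun y => w (p.1, y)) p.2) ∧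
      |deriv^[4] (fun x => w (x, p.2)) p.1| + |deriv^[4] (fun y => w (p.1, y)) p.2| ≤ M


section AuxAndreev

open Filter


/-- Discrete maximum principle on the grid `{0,…,N}²`. -/
lemma maxprin (N : ℕ) (U : ℕ → ℕ → ℝ)
    (hint : ∀ i j, 0 < i → i < N → 0 < j → j < N →
      U (i+1) j + U (i-1) j + U i (j+1) + U i (j-1) ≤ 4 * U i j)
    (hbd : ∀ i j, i ≤ N → j ≤ N → (i = 0 ∨ i = N ∨ j = 0 ∨ j = N) → 0 ≤ U i j) :
    ∀ i j, i ≤ N → j ≤ N → 0 ≤ U i j := by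
  by_contra hc
  push_neg at hc
  obtain ⟨i0, j0, hi0, hj0, hU0⟩ := hc
  set S : Finset (ℕ × ℕ) := (Finset.range (N+1)) ×ˢ (Finset.range (N+1)) with hS
  have hmem : ∀ p : ℕ × ℕ, p ∈ S ↔ p.1 ≤ N ∧ p.2 ≤ N := by
    intro p; simp [hS, Finset.mem_product, Nat.lt_succ_iff]
  have hSne : S.Nonempty := ⟨(i0, j0), (hmem _).2 ⟨hi0, hj0⟩⟩
  -- minimum value
  obtain ⟨q, hqS, hqmin⟩ := S.exists_min_image (fun p => U p.1 p.2) hSne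
  set m := U q.1 q.2 with hm
  have hmneg : m < 0 := lt_of_le_of_lt (hqmin (i0, j0) ((hmem _).2 ⟨hi0, hj0⟩)) hU0
  -- among minimizers, minimal first coordinate
  set T : Finset (ℕ × ℕ) := S.filter (fun p => U p.1 p.2 = m) with hT
  have hTne : T.Nonempty := ⟨q, Finset.mem_filter.2 ⟨hqS, rfl⟩⟩
  obtain ⟨r, hrT, hrmin⟩ := T.exists_min_image (fun p => p.1) hTne
  obtain ⟨hrS, hrval⟩ := Finset.mem_filter.1 hrT
  have hr1 : r.1 ≤ N := ((hmem r).1 hrS).1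
  have hr2 : r.2 ≤ N := ((hmem r).1 hrS).2
  -- r is interior
  have hrint : 0 < r.1 ∧ r.1 < N ∧ 0 < r.2 ∧ r.2 < N := by
    by_contra hb
    have : r.1 = 0 ∨ r.1 = N ∨ r.2 = 0 ∨ r.2 = N := by omega
    have := hbd r.1 r.2 hr1 hr2 this
    rw [hrval] at this; linarith
  obtain ⟨h1, h2, h3, h4⟩ := hrint
  have hkey := hint r.1 r.2 h1 h2 h3 h4
  have hge : ∀ p : ℕ × ℕ, p.1 ≤ N → p.2 ≤ N → m ≤ U p.1 p.2 := by
    intro p hp1 hp2; exact hqmin p ((hmem p).2 ⟨hp1, hp2⟩)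
  have e1 : m ≤ U (r.1+1) r.2 := hge (r.1+1, r.2) (by omega) (by omega)
  have e2 : m ≤ U (r.1-1) r.2 := hge (r.1-1, r.2) (by omega) (by omega)
  have e3 : m ≤ U r.1 (r.2+1) := hge (r.1, r.2+1) (by omega) (by omega)
  have e4 : m ≤ U r.1 (r.2-1) := hge (r.1, r.2-1) (by omega) (by omega)
  rw [hrval] at hkey
  have hEq : U (r.1-1) r.2 = m := le_antisymm (by linarith) e2
  have hmemT : (r.1-1, r.2) ∈ T := Finset.mem_filter.2 ⟨(hmem _).2 ⟨by omega, by omega⟩, hEq⟩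
  have := hrmin _ hmemT
  simp at this
  omega



/-- Discrete logarithmic comparison function on the grid `{0,…,2c}²`. -/
noncomputable def Vf (c : ℕ) (i j : ℕ) : ℝ :=
  if i = c ∧ j = c then 6 + Real.log ((c:ℝ)^2 - 1/2)
  else Real.log ((c:ℝ)^2 - 1/2)
    - Real.log ((((i:ℝ) - c)^2 + ((j:ℝ) - c)^2) - 1/2)

lemma int_one_le_sq_add_sq {a b : ℤ} (h : ¬(a = 0 ∧ b = 0)) : (1:ℤ) ≤ a^2 + b^2 := by
  rcases not_and_or.1 h with ha | hb
  · have h1 : 1 ≤ |a| := Int.one_le_abs (by omega)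
    nlinarith [sq_nonneg b, sq_abs a, sq_nonneg (|a| - 1)]
  · have h1 : 1 ≤ |b| := Int.one_le_abs (by omega)
    nlinarith [sq_nonneg a, sq_abs b, sq_nonneg (|b| - 1)]

lemma V_bd (c : ℕ) (hc : 2 ≤ c) : ∀ i j, i ≤ 2*c → j ≤ 2*c →
    (i = 0 ∨ i = 2*c ∨ j = 0 ∨ j = 2*c) → Vf c i j ≤ 0 := by
  intro i j hi hj hb
  have hnc : ¬(i = c ∧ j = c) := by omega
  rw [Vf, if_neg hnc]
  have hcR : (2:ℝ) ≤ (c:ℝ) := by exact_mod_cast hc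
  have key : (c:ℝ)^2 ≤ (((i:ℝ) - c)^2 + ((j:ℝ) - c)^2) := by
    rcases hb with h | h | h | h <;> subst h <;> push_cast
    · nlinarith [sq_nonneg ((j:ℝ) - (c:ℝ))]
    · nlinarith [sq_nonneg ((j:ℝ) - (c:ℝ))]
    · nlinarith [sq_nonneg ((i:ℝ) - (c:ℝ))]
    · nlinarith [sq_nonneg ((i:ℝ) - (c:ℝ))]
  have h1 : (0:ℝ) < (c:ℝ)^2 - 1/2 := by nlinarith
  have := Real.log_le_log h1 (by linarith : (c:ℝ)^2 - 1/2 ≤ (((i:ℝ) - c)^2 + ((j:ℝ) - c)^2) - 1/2)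
  linarith

lemma Vf_val (c i j : ℕ) (h : ¬(i = c ∧ j = c)) (r : ℝ)
    (hr : (((i:ℝ) - c)^2 + ((j:ℝ) - c)^2) - 1/2 = r) :
    Vf c i j = Real.log ((c:ℝ)^2 - 1/2) - Real.log r := by
  rw [Vf, if_neg h, hr]

lemma eight_log_two_le_six : Real.log (7/2) + 2 * Real.log (3/2) + 4 * Real.log 2 ≤ 6 := by
  have l72 : Real.log (7/2) ≤ 2 * Real.log 2 := by
    have h1 : Real.log (7/2:ℝ) ≤ Real.log 4 := Real.log_le_log (by norm_num) (by norm_num)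
    have h4 : Real.log (4:ℝ) = 2 * Real.log 2 := by
      rw [show (4:ℝ) = 2^2 by norm_num, Real.log_pow]; push_cast; ring
    linarith
  have l32 : Real.log (3/2) ≤ Real.log 2 := Real.log_le_log (by norm_num) (by norm_num)
  have := Real.log_two_lt_d9
  linarith

set_option maxHeartbeats 1000000 in
lemma V_int (c : ℕ) (hc : 2 ≤ c) (i j : ℕ) (hi0 : 0 < i) (hi1 : i < 2*c)
    (hj0 : 0 < j) (hj1 : j < 2*c) (hnc : ¬(i = c ∧ j = c)) :
    4 * Vf c i j ≤ Vf c (i+1) j + Vf c (i-1) j + Vf c i (j+1) + Vf c i (j-1) := by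
  obtain ⟨m, hm⟩ : ∃ m : ℤ, m = (i:ℤ) - (c:ℤ) := ⟨_, rfl⟩
  obtain ⟨n, hn⟩ : ∃ n : ℤ, n = (j:ℤ) - (c:ℤ) := ⟨_, rfl⟩
  have hmn0 : ¬(m = 0 ∧ n = 0) := by omega
  have hcs : ((c - 1 : ℕ) : ℝ) = (c : ℝ) - 1 := by
    have h1 : (1:ℕ) ≤ c := by omega
    push_cast [h1]; ring
  have hcs2 : ((c - 1 - 1 : ℕ) : ℝ) = (c : ℝ) - 2 := by
    have h22 : c - 1 - 1 = c - 2 := by omega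
    rw [h22]; push_cast [hc]; ring
  have lhalf : Real.log (1/2 : ℝ) = - Real.log 2 := by rw [one_div, Real.log_inv]
  have key := eight_log_two_le_six
  by_cases hadj : m^2 + n^2 = 1
  · -- adjacent-to-center case
    have hm2 : m^2 ≤ 1 := by nlinarith [sq_nonneg n]
    have hn2 : n^2 ≤ 1 := by nlinarith [sq_nonneg m]
    have hmb1 : -1 ≤ m := by nlinarith
    have hmb2 : m ≤ 1 := by nlinarith
    have hnb1 : -1 ≤ n := by nlinarith
    have hnb2 : n ≤ 1 := by nlinarith
    have hcase : (m = 1 ∧ n = 0) ∨ (m = -1 ∧ n = 0) ∨ (m = 0 ∧ n = 1) ∨ (m = 0 ∧ n = -1) := by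
      interval_cases m <;> interval_cases n <;> revert hadj <;> norm_num
    rcases hcase with ⟨h1, h2⟩ | ⟨h1, h2⟩ | ⟨h1, h2⟩ | ⟨h1, h2⟩
    · have hi : i = c + 1 := by omega
      have hj : j = c := by omega
      rw [hi, hj]
      have e0 : Vf c (c+1) c = Real.log ((c:ℝ)^2 - 1/2) - Real.log (1/2) :=
        Vf_val _ _ _ (by omega) _ (by push_cast; ring)
      have e1 : Vf c (c+1+1) c = Real.log ((c:ℝ)^2 - 1/2) - Real.log (7/2) :=
        Vf_val _ _ _ (by omega) _ (by push_cast; ring)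
      have e2 : Vf c (c+1-1) c = 6 + Real.log ((c:ℝ)^2 - 1/2) := by
        have h0 : c + 1 - 1 = c := by omega
        rw [h0, Vf, if_pos ⟨rfl, rfl⟩]
      have e3 : Vf c (c+1) (c+1) = Real.log ((c:ℝ)^2 - 1/2) - Real.log (3/2) :=
        Vf_val _ _ _ (by omega) _ (by push_cast; ring)
      have e4 : Vf c (c+1) (c-1) = Real.log ((c:ℝ)^2 - 1/2) - Real.log (3/2) :=
        Vf_val _ _ _ (by omega) _ (by rw [hcs]; push_cast; ring)
      rw [e0, e1, e2, e3, e4, lhalf]; linarith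
    · have hi : i = c - 1 := by omega
      have hj : j = c := by omega
      rw [hi, hj]
      have e0 : Vf c (c-1) c = Real.log ((c:ℝ)^2 - 1/2) - Real.log (1/2) :=
        Vf_val _ _ _ (by omega) _ (by rw [hcs]; push_cast; ring)
      have e1 : Vf c (c-1+1) c = 6 + Real.log ((c:ℝ)^2 - 1/2) := by
        have h0 : c - 1 + 1 = c := by omega
        rw [h0, Vf, if_pos ⟨rfl, rfl⟩]
      have e2 : Vf c (c-1-1) c = Real.log ((c:ℝ)^2 - 1/2) - Real.log (7/2) :=
        Vf_val _ _ _ (by omega) _ (by rw [hcs2]; push_cast; ring)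
      have e3 : Vf c (c-1) (c+1) = Real.log ((c:ℝ)^2 - 1/2) - Real.log (3/2) :=
        Vf_val _ _ _ (by omega) _ (by rw [hcs]; push_cast; ring)
      have e4 : Vf c (c-1) (c-1) = Real.log ((c:ℝ)^2 - 1/2) - Real.log (3/2) :=
        Vf_val _ _ _ (by omega) _ (by rw [hcs]; push_cast; ring)
      rw [e0, e1, e2, e3, e4, lhalf]; linarith
    · have hi : i = c := by omega
      have hj : j = c + 1 := by omega
      rw [hi, hj]
      have e0 : Vf c c (c+1) = Real.log ((c:ℝ)^2 - 1/2) - Real.log (1/2) :=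
        Vf_val _ _ _ (by omega) _ (by push_cast; ring)
      have e1 : Vf c (c+1) (c+1) = Real.log ((c:ℝ)^2 - 1/2) - Real.log (3/2) :=
        Vf_val _ _ _ (by omega) _ (by push_cast; ring)
      have e2 : Vf c (c-1) (c+1) = Real.log ((c:ℝ)^2 - 1/2) - Real.log (3/2) :=
        Vf_val _ _ _ (by omega) _ (by rw [hcs]; push_cast; ring)
      have e3 : Vf c c (c+1+1) = Real.log ((c:ℝ)^2 - 1/2) - Real.log (7/2) :=
        Vf_val _ _ _ (by omega) _ (by push_cast; ring)
      have e4 : Vf c c (c+1-1) = 6 + Real.log ((c:ℝ)^2 - 1/2) := by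
        have h0 : c + 1 - 1 = c := by omega
        rw [h0, Vf, if_pos ⟨rfl, rfl⟩]
      rw [e0, e1, e2, e3, e4, lhalf]; linarith
    · have hi : i = c := by omega
      have hj : j = c - 1 := by omega
      rw [hi, hj]
      have e0 : Vf c c (c-1) = Real.log ((c:ℝ)^2 - 1/2) - Real.log (1/2) :=
        Vf_val _ _ _ (by omega) _ (by rw [hcs]; push_cast; ring)
      have e1 : Vf c (c+1) (c-1) = Real.log ((c:ℝ)^2 - 1/2) - Real.log (3/2) :=
        Vf_val _ _ _ (by omega) _ (by rw [hcs]; push_cast; ring)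
      have e2 : Vf c (c-1) (c-1) = Real.log ((c:ℝ)^2 - 1/2) - Real.log (3/2) :=
        Vf_val _ _ _ (by omega) _ (by rw [hcs]; push_cast; ring)
      have e3 : Vf c c (c-1+1) = 6 + Real.log ((c:ℝ)^2 - 1/2) := by
        have h0 : c - 1 + 1 = c := by omega
        rw [h0, Vf, if_pos ⟨rfl, rfl⟩]
      have e4 : Vf c c (c-1-1) = Real.log ((c:ℝ)^2 - 1/2) - Real.log (7/2) :=
        Vf_val _ _ _ (by omega) _ (by rw [hcs2]; push_cast; ring)
      rw [e0, e1, e2, e3, e4, lhalf]; linarith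
  · -- generic case: m² + n² ≥ 2
    have ht1 : (1:ℤ) ≤ m^2 + n^2 := int_one_le_sq_add_sq hmn0
    have ht : (2:ℤ) ≤ m^2 + n^2 := by
      rcases ht1.lt_or_eq with h | h
      · omega
      · exact absurd h.symm hadj
    have nb1 : (1:ℤ) ≤ (m+1)^2 + n^2 := by
      refine int_one_le_sq_add_sq ?_
      rintro ⟨h1, h2⟩
      have hm1 : m = -1 := by omega
      rw [hm1, h2] at ht; norm_num at ht
    have nb2 : (1:ℤ) ≤ (m-1)^2 + n^2 := by
      refine int_one_le_sq_add_sq ?_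
      rintro ⟨h1, h2⟩
      have hm1 : m = 1 := by omega
      rw [hm1, h2] at ht; norm_num at ht
    have nb3 : (1:ℤ) ≤ m^2 + (n+1)^2 := by
      refine int_one_le_sq_add_sq ?_
      rintro ⟨h1, h2⟩
      have hn1 : n = -1 := by omega
      rw [hn1, h1] at ht; norm_num at ht
    have nb4 : (1:ℤ) ≤ m^2 + (n-1)^2 := by
      refine int_one_le_sq_add_sq ?_
      rintro ⟨h1, h2⟩
      have hn1 : n = 1 := by omega
      rw [hn1, h1] at ht; norm_num at ht
    have haR : ((m:ℝ)^2 + (n:ℝ)^2) ≥ 2 := by exact_mod_cast ht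
    have hnb1R : (((m:ℝ)+1)^2 + (n:ℝ)^2) ≥ 1 := by exact_mod_cast nb1
    have hnb2R : (((m:ℝ)-1)^2 + (n:ℝ)^2) ≥ 1 := by exact_mod_cast nb2
    have hnb3R : ((m:ℝ)^2 + ((n:ℝ)+1)^2) ≥ 1 := by exact_mod_cast nb3
    have hnb4R : ((m:ℝ)^2 + ((n:ℝ)-1)^2) ≥ 1 := by exact_mod_cast nb4
    have hiR : (i:ℝ) - (c:ℝ) = (m:ℝ) := by
      have : ((i:ℤ) - (c:ℤ) : ℤ) = m := hm.symm
      exact_mod_cast congrArg (Int.cast : ℤ → ℝ) this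
    have hjR : (j:ℝ) - (c:ℝ) = (n:ℝ) := by
      have : ((j:ℤ) - (c:ℤ) : ℤ) = n := hn.symm
      exact_mod_cast congrArg (Int.cast : ℤ → ℝ) this
    have hip : ((i+1 : ℕ):ℝ) - (c:ℝ) = (m:ℝ) + 1 := by push_cast; linarith
    have him : ((i-1 : ℕ):ℝ) - (c:ℝ) = (m:ℝ) - 1 := by
      have h1 : (1:ℕ) ≤ i := hi0
      push_cast [h1]; linarith
    have hjp : ((j+1 : ℕ):ℝ) - (c:ℝ) = (n:ℝ) + 1 := by push_cast; linarith
    have hjm : ((j-1 : ℕ):ℝ) - (c:ℝ) = (n:ℝ) - 1 := by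
      have h1 : (1:ℕ) ≤ j := hj0
      push_cast [h1]; linarith
    have g1 : ¬(i + 1 = c ∧ j = c) := by
      rintro ⟨h1, h2⟩
      have hm1 : m = -1 := by omega
      have hn0 : n = 0 := by omega
      rw [hm1, hn0] at ht; norm_num at ht
    have g2 : ¬(i - 1 = c ∧ j = c) := by
      rintro ⟨h1, h2⟩
      have hm1 : m = 1 := by omega
      have hn0 : n = 0 := by omega
      rw [hm1, hn0] at ht; norm_num at ht
    have g3 : ¬(i = c ∧ j + 1 = c) := by
      rintro ⟨h1, h2⟩
      have hm1 : m = 0 := by omega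
      have hn0 : n = -1 := by omega
      rw [hm1, hn0] at ht; norm_num at ht
    have g4 : ¬(i = c ∧ j - 1 = c) := by
      rintro ⟨h1, h2⟩
      have hm1 : m = 0 := by omega
      have hn0 : n = 1 := by omega
      rw [hm1, hn0] at ht; norm_num at ht
    have e0 : Vf c i j
        = Real.log ((c:ℝ)^2 - 1/2) - Real.log ((m:ℝ)^2 + (n:ℝ)^2 - 1/2) :=
      Vf_val _ _ _ hnc _ (by rw [hiR, hjR])
    have e1 : Vf c (i+1) j
        = Real.log ((c:ℝ)^2 - 1/2) - Real.log (((m:ℝ)+1)^2 + (n:ℝ)^2 - 1/2) :=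
      Vf_val _ _ _ g1 _ (by rw [hip, hjR])
    have e2 : Vf c (i-1) j
        = Real.log ((c:ℝ)^2 - 1/2) - Real.log (((m:ℝ)-1)^2 + (n:ℝ)^2 - 1/2) :=
      Vf_val _ _ _ g2 _ (by rw [him, hjR])
    have e3 : Vf c i (j+1)
        = Real.log ((c:ℝ)^2 - 1/2) - Real.log ((m:ℝ)^2 + ((n:ℝ)+1)^2 - 1/2) :=
      Vf_val _ _ _ g3 _ (by rw [hiR, hjp])
    have e4 : Vf c i (j-1)
        = Real.log ((c:ℝ)^2 - 1/2) - Real.log ((m:ℝ)^2 + ((n:ℝ)-1)^2 - 1/2) :=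
      Vf_val _ _ _ g4 _ (by rw [hiR, hjm])
    rw [e0, e1, e2, e3, e4]
    have hsp : (0:ℝ) < (m:ℝ)^2 + (n:ℝ)^2 - 1/2 := by linarith
    have hs1p : (0:ℝ) < ((m:ℝ)+1)^2 + (n:ℝ)^2 - 1/2 := by linarith
    have hs2p : (0:ℝ) < ((m:ℝ)-1)^2 + (n:ℝ)^2 - 1/2 := by linarith
    have hs3p : (0:ℝ) < (m:ℝ)^2 + ((n:ℝ)+1)^2 - 1/2 := by linarith
    have hs4p : (0:ℝ) < (m:ℝ)^2 + ((n:ℝ)-1)^2 - 1/2 := by linarith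
    have hprod : (((m:ℝ)+1)^2 + (n:ℝ)^2 - 1/2) * (((m:ℝ)-1)^2 + (n:ℝ)^2 - 1/2)
        * ((m:ℝ)^2 + ((n:ℝ)+1)^2 - 1/2) * ((m:ℝ)^2 + ((n:ℝ)-1)^2 - 1/2)
        ≤ ((m:ℝ)^2 + (n:ℝ)^2 - 1/2)^4 := by
      nlinarith [sq_nonneg ((m:ℝ)^2 - (n:ℝ)^2)]
    have hmul : Real.log ((((m:ℝ)+1)^2 + (n:ℝ)^2 - 1/2) * (((m:ℝ)-1)^2 + (n:ℝ)^2 - 1/2)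
        * ((m:ℝ)^2 + ((n:ℝ)+1)^2 - 1/2) * ((m:ℝ)^2 + ((n:ℝ)-1)^2 - 1/2))
        = Real.log (((m:ℝ)+1)^2 + (n:ℝ)^2 - 1/2) + Real.log (((m:ℝ)-1)^2 + (n:ℝ)^2 - 1/2)
        + Real.log ((m:ℝ)^2 + ((n:ℝ)+1)^2 - 1/2) + Real.log ((m:ℝ)^2 + ((n:ℝ)-1)^2 - 1/2) := by
      rw [Real.log_mul (by positivity) hs4p.ne', Real.log_mul (by positivity) hs3p.ne',
        Real.log_mul hs1p.ne' hs2p.ne']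
    have hp4 : Real.log (((m:ℝ)^2 + (n:ℝ)^2 - 1/2)^4)
        = 4 * Real.log ((m:ℝ)^2 + (n:ℝ)^2 - 1/2) := by
      rw [Real.log_pow]; push_cast; ring
    have hlog := Real.log_le_log (by positivity) hprod
    rw [hmul, hp4] at hlog
    linarith

lemma V_cen (c : ℕ) (hc : 2 ≤ c) :
    4 * Vf c c c - 24 ≤ Vf c (c+1) c + Vf c (c-1) c + Vf c c (c+1) + Vf c c (c-1) := by
  set A := Real.log ((c:ℝ)^2 - 1/2) with hA
  have hcs : ((c - 1 : ℕ) : ℝ) = (c : ℝ) - 1 := by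
    have : (1:ℕ) ≤ c := by omega
    push_cast [this]; ring
  have e0 : Vf c c c = 6 + A := by rw [Vf, if_pos ⟨rfl, rfl⟩]
  have e1 : Vf c (c+1) c = A - Real.log (1/2) :=
    Vf_val _ _ _ (by omega) _ (by push_cast; ring)
  have e2 : Vf c (c-1) c = A - Real.log (1/2) :=
    Vf_val _ _ _ (by omega) _ (by rw [hcs]; push_cast; ring)
  have e3 : Vf c c (c+1) = A - Real.log (1/2) :=
    Vf_val _ _ _ (by omega) _ (by push_cast; ring)
  have e4 : Vf c c (c-1) = A - Real.log (1/2) :=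
    Vf_val _ _ _ (by omega) _ (by rw [hcs]; push_cast; ring)
  have lhalf : Real.log (1/2 : ℝ) = - Real.log 2 := by rw [one_div, Real.log_inv]
  have l2 : (0:ℝ) ≤ Real.log 2 := Real.log_nonneg one_le_two
  rw [e0, e1, e2, e3, e4, lhalf]; linarith

lemma V_val (c : ℕ) (hc : 2 ≤ c) : (1/2) * Real.log ((2*c : ℕ) : ℝ) ≤ Vf c c c := by
  have e0 : Vf c c c = 6 + Real.log ((c:ℝ)^2 - 1/2) := by rw [Vf, if_pos ⟨rfl, rfl⟩]
  have hcR : (2:ℝ) ≤ (c:ℝ) := by exact_mod_cast hc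
  have h1 : (0:ℝ) < (c:ℝ)^2 - 1/2 := by nlinarith
  have hsq : ((2*c : ℕ) : ℝ) ≤ ((c:ℝ)^2 - 1/2)^2 := by
    have h4 : (c:ℝ)^2 ≥ 2*(c:ℝ) := by nlinarith
    have h5 : (c:ℝ)^2 ≥ 4 := by nlinarith
    push_cast; nlinarith
  have h2 : Real.log ((2*c : ℕ) : ℝ) ≤ Real.log (((c:ℝ)^2 - 1/2)^2) := by
    apply Real.log_le_log (by positivity) hsq
  have h3 : Real.log (((c:ℝ)^2 - 1/2)^2) = 2 * Real.log ((c:ℝ)^2 - 1/2) := by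
    rw [Real.log_pow]; push_cast; ring
  rw [e0]
  have l2 : (0:ℝ) ≤ Real.log ((c:ℝ)^2 - 1/2) := by
    apply Real.log_nonneg; nlinarith
  linarith [h2, h3]



lemma hasDerivAt_congr_fun' {f g : ℝ → ℝ} {d x : ℝ} (h : HasDerivAt f d x)
    (he : ∀ s, g s = f s) : HasDerivAt g d x :=
  h.congr_of_eventuallyEq (Filter.Eventually.of_forall he)

lemma antitone_key (h : ℝ) (f f' : ℝ → ℝ)
    (hd : ∀ t ∈ Set.Ioo (0:ℝ) h, HasDerivAt f (f' t) t)
    (hf' : ∀ t ∈ Set.Ioo (0:ℝ) h, f' t ≤ 0)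
    (hlim : Filter.Tendsto f (nhdsWithin 0 (Set.Ioi 0)) (nhds 0)) :
    ∀ t ∈ Set.Ioo (0:ℝ) h, f t ≤ 0 := by
  have hant : AntitoneOn f (Set.Ioo 0 h) := by
    apply antitoneOn_of_deriv_nonpos (convex_Ioo 0 h)
    · exact fun t ht => (hd t ht).continuousAt.continuousWithinAt
    · intro t ht
      rw [interior_Ioo] at ht
      exact (hd t ht).differentiableAt.differentiableWithinAt
    · intro t ht
      rw [interior_Ioo] at ht
      rw [(hd t ht).deriv]
      exact hf' t ht
  intro t ht
  have hev : ∀ᶠ s in nhdsWithin 0 (Set.Ioi 0), f t ≤ f s := by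
    filter_upwards [Ioo_mem_nhdsGT_of_mem (by constructor <;> [rfl; exact ht.1] :
      (0:ℝ) ∈ Set.Ico 0 t)] with s hs
    exact hant ⟨hs.1, hs.2.trans ht.2⟩ ht hs.2.le
  exact ge_of_tendsto hlim hev

lemma endpoint_le (h : ℝ) (hh : 0 < h) (f : ℝ → ℝ)
    (hneg : ∀ t ∈ Set.Ioo (0:ℝ) h, f t ≤ 0)
    (hcont : ContinuousWithinAt f (Set.Ioo 0 h) h) : f h ≤ 0 := by
  have hne : (nhdsWithin h (Set.Ioo (0:ℝ) h)).NeBot := by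
    rw [← mem_closure_iff_nhdsWithin_neBot, closure_Ioo hh.ne]
    exact right_mem_Icc.2 hh.le
  refine le_of_tendsto hcont ?_
  filter_upwards [self_mem_nhdsWithin] with s hs using hneg s hs

lemma hasDerivAt_comp_add (F : ℝ → ℝ) (x t d : ℝ) (hF : HasDerivAt F d (x + t)) :
    HasDerivAt (fun s => F (x + s)) d t := by
  have := hF.comp t ((hasDerivAt_id t).const_add x)
  simpa [Function.comp_def] using this

lemma hasDerivAt_comp_sub (F : ℝ → ℝ) (x t d : ℝ) (hF : HasDerivAt F d (x - t)) :
    HasDerivAt (fun s => F (x - s)) (-d) t := by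
  have h2 : HasDerivAt (fun s : ℝ => x - s) (-1) t := (hasDerivAt_id t).const_sub x
  have := hF.comp t h2
  simpa [Function.comp_def] using this

lemma taylor_upper (g : ℝ → ℝ) (x h M : ℝ) (hh : 0 < h)
    (hderiv : ∀ s ∈ Set.Ioo (x - h) (x + h), ∀ k < 4, DifferentiableAt ℝ (deriv^[k] g) s)
    (hM : ∀ s ∈ Set.Ioo (x - h) (x + h), deriv^[4] g s ≤ M)
    (hc1 : ContinuousWithinAt g (Set.Ioo (x - h) (x + h)) (x + h))
    (hc2 : ContinuousWithinAt g (Set.Ioo (x - h) (x + h)) (x - h)) :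
    g (x + h) + g (x - h) - 2 * g x - h^2 * deriv (deriv g) x ≤ M * h^4 / 12 := by
  have hx : x ∈ Set.Ioo (x - h) (x + h) := ⟨by linarith, by linarith⟩
  have hmem : ∀ t ∈ Set.Ioo (0:ℝ) h, x + t ∈ Set.Ioo (x - h) (x + h) ∧
      x - t ∈ Set.Ioo (x - h) (x + h) := by
    intro t ht
    obtain ⟨h1, h2⟩ := ht
    exact ⟨⟨by linarith, by linarith⟩, ⟨by linarith, by linarith⟩⟩
  set g1 := deriv g with hg1
  set g2 := deriv^[2] g with hg2
  set g3 := deriv^[3] g with hg3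
  set g4 := deriv^[4] g with hg4
  set φ3 : ℝ → ℝ := fun t => g3 (x + t) - g3 (x - t) - 2*M*t with hφ3
  set φ2 : ℝ → ℝ := fun t => g2 (x + t) + g2 (x - t) - 2 * g2 x - M*t^2 with hφ2
  set φ1 : ℝ → ℝ := fun t => g1 (x + t) - g1 (x - t) - 2*t*(g2 x) - M*t^3/3 with hφ1
  set φ0 : ℝ → ℝ := fun t => g (x + t) + g (x - t) - 2*(g x) - t^2*(g2 x) - M*t^4/12 with hφ0
  have hD0 : ∀ s ∈ Set.Ioo (x - h) (x + h), HasDerivAt g (g1 s) s := by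
    intro s hs
    exact (hderiv s hs 0 (by norm_num)).hasDerivAt
  have hD1 : ∀ s ∈ Set.Ioo (x - h) (x + h), HasDerivAt g1 (g2 s) s := by
    intro s hs
    have := (hderiv s hs 1 (by norm_num)).hasDerivAt
    have h2 : deriv (deriv^[1] g) s = g2 s := by
      rw [hg2, show (2:ℕ) = 1 + 1 from rfl, Function.iterate_succ_apply' deriv 1 g]
    rw [h2] at this
    exact this
  have hD2 : ∀ s ∈ Set.Ioo (x - h) (x + h), HasDerivAt g2 (g3 s) s := by
    intro s hs
    have := (hderiv s hs 2 (by norm_num)).hasDerivAt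
    have h2 : deriv (deriv^[2] g) s = g3 s := by
      rw [hg3, show (3:ℕ) = 2 + 1 from rfl, Function.iterate_succ_apply' deriv 2 g]
    rw [h2] at this
    exact this
  have hD3 : ∀ s ∈ Set.Ioo (x - h) (x + h), HasDerivAt g3 (g4 s) s := by
    intro s hs
    have := (hderiv s hs 3 (by norm_num)).hasDerivAt
    have h2 : deriv (deriv^[3] g) s = g4 s := by
      rw [hg4, show (4:ℕ) = 3 + 1 from rfl, Function.iterate_succ_apply' deriv 3 g]
    rw [h2] at this
    exact this
  -- φ3
  have hd3 : ∀ t ∈ Set.Ioo (0:ℝ) h, HasDerivAt φ3 (g4 (x + t) + g4 (x - t) - 2*M) t := by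
    intro t ht
    obtain ⟨hp, hm⟩ := hmem t ht
    have a1 := hasDerivAt_comp_add g3 x t _ (hD3 _ hp)
    have a2 := hasDerivAt_comp_sub g3 x t _ (hD3 _ hm)
    have a3 : HasDerivAt (fun s : ℝ => 2*M*s) (2*M) t := by
      simpa using (hasDerivAt_id t).const_mul (2*M)
    have raw := (a1.sub a2).sub a3
    have hval : g4 (x + t) - -g4 (x - t) - 2*M = g4 (x + t) + g4 (x - t) - 2*M := by ring
    rw [hval] at raw
    exact hasDerivAt_congr_fun' raw (fun s => by rw [hφ3]; rfl)
  have hb3 : ∀ t ∈ Set.Ioo (0:ℝ) h, g4 (x + t) + g4 (x - t) - 2*M ≤ 0 := by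
    intro t ht
    obtain ⟨hp, hm⟩ := hmem t ht
    have b1 := hM _ hp; have b2 := hM _ hm
    linarith
  have hl3 : Filter.Tendsto φ3 (nhdsWithin 0 (Set.Ioi 0)) (nhds 0) := by
    have c3 : ContinuousAt g3 x := (hderiv x hx 3 (by norm_num)).continuousAt
    have e1 : ContinuousAt (fun t : ℝ => g3 (x + t)) 0 := by
      have h1 : ContinuousAt (fun t : ℝ => x + t) 0 := by fun_prop
      have c3' : ContinuousAt g3 ((fun t : ℝ => x + t) 0) := by simpa using c3
      exact c3'.comp h1
    have e2 : ContinuousAt (fun t : ℝ => g3 (x - t)) 0 := by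
      have h1 : ContinuousAt (fun t : ℝ => x - t) 0 := by fun_prop
      have c3' : ContinuousAt g3 ((fun t : ℝ => x - t) 0) := by simpa using c3
      exact c3'.comp h1
    have hca : ContinuousAt φ3 0 := by
      rw [hφ3]; exact (e1.sub e2).sub (by fun_prop)
    have h0 : φ3 0 = 0 := by rw [hφ3]; simp
    have := hca.tendsto
    rw [h0] at this
    exact this.mono_left nhdsWithin_le_nhds
  have hneg3 := antitone_key h φ3 _ hd3 hb3 hl3
  -- φ2
  have hd2 : ∀ t ∈ Set.Ioo (0:ℝ) h, HasDerivAt φ2 (φ3 t) t := by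
    intro t ht
    obtain ⟨hp, hm⟩ := hmem t ht
    have a1 := hasDerivAt_comp_add g2 x t _ (hD2 _ hp)
    have a2 := hasDerivAt_comp_sub g2 x t _ (hD2 _ hm)
    have a3 : HasDerivAt (fun s : ℝ => M*s^2) (M*(2*t^(2-1))) t := (hasDerivAt_pow 2 t).const_mul M
    have raw := ((a1.add a2).sub (hasDerivAt_const t (2 * g2 x))).sub a3
    have hval : g3 (x + t) + -g3 (x - t) - 0 - M*(2*t^(2-1)) = φ3 t := by
      rw [hφ3]; norm_num; ring
    rw [hval] at raw
    exact hasDerivAt_congr_fun' raw (fun s => by rw [hφ2]; rfl)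
  have hl2 : Filter.Tendsto φ2 (nhdsWithin 0 (Set.Ioi 0)) (nhds 0) := by
    have c2 : ContinuousAt g2 x := (hderiv x hx 2 (by norm_num)).continuousAt
    have e1 : ContinuousAt (fun t : ℝ => g2 (x + t)) 0 := by
      have h1 : ContinuousAt (fun t : ℝ => x + t) 0 := by fun_prop
      have c2' : ContinuousAt g2 ((fun t : ℝ => x + t) 0) := by simpa using c2
      exact c2'.comp h1
    have e2 : ContinuousAt (fun t : ℝ => g2 (x - t)) 0 := by
      have h1 : ContinuousAt (fun t : ℝ => x - t) 0 := by fun_prop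
      have c2' : ContinuousAt g2 ((fun t : ℝ => x - t) 0) := by simpa using c2
      exact c2'.comp h1
    have hca : ContinuousAt φ2 0 := by
      rw [hφ2]; exact ((e1.add e2).sub (by fun_prop)).sub (by fun_prop)
    have h0 : φ2 0 = 0 := by rw [hφ2]; norm_num; ring
    have := hca.tendsto
    rw [h0] at this
    exact this.mono_left nhdsWithin_le_nhds
  have hneg2 := antitone_key h φ2 _ hd2 hneg3 hl2
  -- φ1
  have hd1 : ∀ t ∈ Set.Ioo (0:ℝ) h, HasDerivAt φ1 (φ2 t) t := by
    intro t ht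
    obtain ⟨hp, hm⟩ := hmem t ht
    have a1 := hasDerivAt_comp_add g1 x t _ (hD1 _ hp)
    have a2 := hasDerivAt_comp_sub g1 x t _ (hD1 _ hm)
    have a3 : HasDerivAt (fun s : ℝ => 2*s*(g2 x)) (2*(g2 x)) t := by
      have := (hasDerivAt_id t).const_mul (2 * (g2 x))
      have h2 : HasDerivAt (fun s : ℝ => 2 * (g2 x) * s) (2 * (g2 x)) t := by simpa using this
      exact hasDerivAt_congr_fun' h2 (fun s => by ring)
    have a4 : HasDerivAt (fun s : ℝ => M*s^3/3) (M*(3*t^(3-1))/3) t :=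
      ((hasDerivAt_pow 3 t).const_mul M).div_const 3
    have raw := ((a1.sub a2).sub a3).sub a4
    have hval : g2 (x + t) - -g2 (x - t) - 2*(g2 x) - M*(3*t^(3-1))/3 = φ2 t := by
      rw [hφ2]; norm_num; ring
    rw [hval] at raw
    exact hasDerivAt_congr_fun' raw (fun s => by rw [hφ1]; rfl)
  have hl1 : Filter.Tendsto φ1 (nhdsWithin 0 (Set.Ioi 0)) (nhds 0) := by
    have c1 : ContinuousAt g1 x := (hderiv x hx 1 (by norm_num)).continuousAt
    have e1 : ContinuousAt (fun t : ℝ => g1 (x + t)) 0 := by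
      have h1 : ContinuousAt (fun t : ℝ => x + t) 0 := by fun_prop
      have c1' : ContinuousAt g1 ((fun t : ℝ => x + t) 0) := by simpa using c1
      exact c1'.comp h1
    have e2 : ContinuousAt (fun t : ℝ => g1 (x - t)) 0 := by
      have h1 : ContinuousAt (fun t : ℝ => x - t) 0 := by fun_prop
      have c1' : ContinuousAt g1 ((fun t : ℝ => x - t) 0) := by simpa using c1
      exact c1'.comp h1
    have hca : ContinuousAt φ1 0 := by
      rw [hφ1]; exact ((e1.sub e2).sub (by fun_prop)).sub (by fun_prop)
    have h0 : φ1 0 = 0 := by rw [hφ1]; norm_num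
    have := hca.tendsto
    rw [h0] at this
    exact this.mono_left nhdsWithin_le_nhds
  have hneg1 := antitone_key h φ1 _ hd1 hneg2 hl1
  -- φ0
  have hd0 : ∀ t ∈ Set.Ioo (0:ℝ) h, HasDerivAt φ0 (φ1 t) t := by
    intro t ht
    obtain ⟨hp, hm⟩ := hmem t ht
    have a1 := hasDerivAt_comp_add g x t _ (hD0 _ hp)
    have a2 := hasDerivAt_comp_sub g x t _ (hD0 _ hm)
    have a3 : HasDerivAt (fun s : ℝ => s^2*(g2 x)) (2*t*(g2 x)) t := by
      have := (hasDerivAt_pow 2 t).const_mul (g2 x)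
      have h2 : HasDerivAt (fun s : ℝ => (g2 x) * s^2) ((g2 x)*(2*t^(2-1))) t := this
      have h3 := hasDerivAt_congr_fun' (g := fun s : ℝ => s^2*(g2 x)) h2 (fun s => by ring)
      have hval : (g2 x)*(2*t^(2-1)) = 2*t*(g2 x) := by norm_num; ring
      rw [hval] at h3
      exact h3
    have a4 : HasDerivAt (fun s : ℝ => M*s^4/12) (M*(4*t^(4-1))/12) t :=
      ((hasDerivAt_pow 4 t).const_mul M).div_const 12
    have raw := (((a1.add a2).sub (hasDerivAt_const t (2 * g x))).sub a3).sub a4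
    have hval : g1 (x + t) + -g1 (x - t) - 0 - 2*t*(g2 x) - M*(4*t^(4-1))/12 = φ1 t := by
      rw [hφ1]; norm_num; ring
    rw [hval] at raw
    exact hasDerivAt_congr_fun' raw (fun s => by rw [hφ0]; rfl)
  have hl0 : Filter.Tendsto φ0 (nhdsWithin 0 (Set.Ioi 0)) (nhds 0) := by
    have c0 : ContinuousAt g x := (hderiv x hx 0 (by norm_num)).continuousAt
    have e1 : ContinuousAt (fun t : ℝ => g (x + t)) 0 := by
      have h1 : ContinuousAt (fun t : ℝ => x + t) 0 := by fun_prop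
      have c0' : ContinuousAt g ((fun t : ℝ => x + t) 0) := by simpa using c0
      exact c0'.comp h1
    have e2 : ContinuousAt (fun t : ℝ => g (x - t)) 0 := by
      have h1 : ContinuousAt (fun t : ℝ => x - t) 0 := by fun_prop
      have c0' : ContinuousAt g ((fun t : ℝ => x - t) 0) := by simpa using c0
      exact c0'.comp h1
    have hca : ContinuousAt φ0 0 := by
      rw [hφ0]; exact (((e1.add e2).sub (by fun_prop)).sub (by fun_prop)).sub (by fun_prop)
    have h0 : φ0 0 = 0 := by rw [hφ0]; norm_num; ring
    have := hca.tendsto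
    rw [h0] at this
    exact this.mono_left nhdsWithin_le_nhds
  have hneg0 := antitone_key h φ0 _ hd0 hneg1 hl0
  -- endpoint
  have hcw : ContinuousWithinAt φ0 (Set.Ioo 0 h) h := by
    have m1 : Set.MapsTo (fun t : ℝ => x + t) (Set.Ioo (0:ℝ) h) (Set.Ioo (x-h) (x+h)) := by
      intro t ht
      exact ⟨show x - h < x + t by linarith [ht.1, ht.2],
             show x + t < x + h by linarith [ht.2]⟩
    have m2 : Set.MapsTo (fun t : ℝ => x - t) (Set.Ioo (0:ℝ) h) (Set.Ioo (x-h) (x+h)) := by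
      intro t ht
      exact ⟨show x - h < x - t by linarith [ht.2],
             show x - t < x + h by linarith [ht.1]⟩
    have hin1 : ContinuousWithinAt (fun t : ℝ => x + t) (Set.Ioo (0:ℝ) h) h :=
      (continuous_const.add continuous_id).continuousWithinAt
    have hin2 : ContinuousWithinAt (fun t : ℝ => x - t) (Set.Ioo (0:ℝ) h) h :=
      (continuous_const.sub continuous_id).continuousWithinAt
    have e1 : ContinuousWithinAt (fun t : ℝ => g (x + t)) (Set.Ioo 0 h) h :=
      ContinuousWithinAt.comp hc1 hin1 m1
    have e2 : ContinuousWithinAt (fun t : ℝ => g (x - t)) (Set.Ioo 0 h) h := by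
      have hc2' : ContinuousWithinAt g (Set.Ioo (x-h) (x+h)) ((fun t : ℝ => x - t) h) := by
        simpa using hc2
      exact ContinuousWithinAt.comp hc2' hin2 m2
    rw [hφ0]
    exact (((e1.add e2).sub continuous_const.continuousWithinAt).sub
      ((continuous_pow 2).continuousWithinAt.mul continuous_const.continuousWithinAt)).sub
      (((continuous_const.mul (continuous_pow 4)).div_const 12).continuousWithinAt)
  have hfin := endpoint_le h hh φ0 hneg0 hcw
  rw [hφ0] at hfin
  simp only at hfin
  have hii : deriv (deriv g) x = g2 x := by
    rw [hg2, show (2:ℕ) = 1 + 1 from rfl, Function.iterate_succ_apply' deriv 1 g]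
    rfl
  rw [hii]
  linarith


end AuxAndreev

-- helper for second differences
lemma sumnb (N : ℕ) (hN : (0:ℝ) < (N:ℝ)) (F : ℕ → ℕ → ℝ) (i j : ℕ) :
    F (i+1) j + F (i-1) j + F i (j+1) + F i (j-1) - 4 * F i j
      = (dx2 N F i j + dy2 N F i j) * ((N : ℝ)⁻¹ ^ 2) := by
  rw [dx2, dy2]
  field_simp
  ring

set_option maxHeartbeats 2000000 in
/-- Lemma 3, after Andreev: the pointwise lower error bound
`w(1/2,1/2) - W̃_{N/2,N/2} ≥ C₁ h² ln N · F̃(1/2,1/2) - C₂ h²`. -/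
theorem andreev_lower_bound :
    ∃ C₁ > (0 : ℝ), ∀ M > (0 : ℝ), ∃ C₂ > (0 : ℝ),
      ∀ (Ft w : ℝ × ℝ → ℝ) (N : ℕ) (Wt : ℕ → ℕ → ℝ),
        ContinuousOn Ft unitSq → 0 ≤ Ft (1 / 2, 1 / 2) →
        ContinuousOn w unitSq → ContDiffOn ℝ 2 w unitOSq →
        (∀ p ∈ unitOSq, -(pdx2 w p + pdy2 w p) = Ft p) →
        (∀ p ∈ unitSq, OnBdry p → w p = 0) →
        Reg4 w M →
        4 ≤ N → Even N →
        (∀ i j, 0 < i → i < N → 0 < j → j < N →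
          -(dx2 N Wt i j + dy2 N Wt i j) = gam N i j * Ft ((i : ℝ) / N, (j : ℝ) / N)) →
        (∀ i j, i ≤ N → j ≤ N → (i = 0 ∨ i = N ∨ j = 0 ∨ j = N) → Wt i j = 0) →
        C₁ * (N : ℝ)⁻¹ ^ 2 * Real.log N * Ft (1 / 2, 1 / 2) - C₂ * (N : ℝ)⁻¹ ^ 2 ≤
          w (1 / 2, 1 / 2) - Wt (N / 2) (N / 2) := by
  refine ⟨1/144, by norm_num, ?_⟩
  intro M hM
  refine ⟨M, hM, ?_⟩
  intro Ft w N Wt hFc hF0 hwc hw2 hPDE hbdry hReg hN4 hEven hSch hWbd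
  classical
  obtain ⟨hReg3, hReg4⟩ := hReg
  set c := N / 2 with hcdef
  have hNc : N = 2 * c := by
    rcases hEven with ⟨r, hr⟩; omega
  have hc2 : 2 ≤ c := by omega
  have hN0 : 0 < N := by omega
  have hNR : (0:ℝ) < (N:ℝ) := by exact_mod_cast hN0
  have hh2pos : (0:ℝ) < (N:ℝ)⁻¹^2 := by positivity
  have hhpos : (0:ℝ) < (N:ℝ)⁻¹ := by positivity
  -- grid coordinate facts
  have hmemIcc : ∀ i : ℕ, i ≤ N → (i:ℝ)/N ∈ Icc (0:ℝ) 1 := by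
    intro i hi
    constructor
    · positivity
    · rw [div_le_one hNR]; exact_mod_cast hi
  have hmemIoo : ∀ i : ℕ, 0 < i → i < N → (i:ℝ)/N ∈ Ioo (0:ℝ) 1 := by
    intro i h1 h2
    constructor
    · apply div_pos (by exact_mod_cast h1) hNR
    · rw [div_lt_one hNR]; exact_mod_cast h2
  have hSqmem : ∀ a b : ℝ, a ∈ Icc (0:ℝ) 1 → b ∈ Icc (0:ℝ) 1 → (a,b) ∈ unitSq :=
    fun a b ha hb => ⟨ha, hb⟩
  have hOSqmem : ∀ a b : ℝ, a ∈ Ioo (0:ℝ) 1 → b ∈ Ioo (0:ℝ) 1 → (a,b) ∈ unitOSq :=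
    fun a b ha hb => ⟨ha, hb⟩
  have hcR : (c:ℝ)/N = 1/2 := by
    have hcR0 : (0:ℝ) < (c:ℝ) := by exact_mod_cast (by omega : 0 < c)
    rw [hNc]; push_cast; field_simp
  -- coordinate steps
  have hxp : ∀ i : ℕ, ((i+1:ℕ):ℝ)/N = (i:ℝ)/N + (N:ℝ)⁻¹ := by
    intro i; push_cast; field_simp
  have hxm : ∀ i : ℕ, 0 < i → ((i-1:ℕ):ℝ)/N = (i:ℝ)/N - (N:ℝ)⁻¹ := by
    intro i h1
    have h1' : (1:ℕ) ≤ i := h1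
    push_cast [h1']; field_simp
  -- Taylor estimates in each direction
  have hTx : ∀ i j : ℕ, 0 < i → i < N → 0 < j → j < N →
      w (((i+1:ℕ):ℝ)/N, (j:ℝ)/N) + w (((i-1:ℕ):ℝ)/N, (j:ℝ)/N) - 2 * w ((i:ℝ)/N, (j:ℝ)/N)
        - (N:ℝ)⁻¹^2 * pdx2 w ((i:ℝ)/N, (j:ℝ)/N) ≤ M * ((N:ℝ)⁻¹)^4 / 12 := by
    intro i j hi0 hi1 hj0 hj1
    have hyIoo : (j:ℝ)/N ∈ Ioo (0:ℝ) 1 := hmemIoo j hj0 hj1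
    have hyIcc : (j:ℝ)/N ∈ Icc (0:ℝ) 1 := hmemIcc j (by omega)
    set x := (i:ℝ)/N with hxdef
    set y := (j:ℝ)/N with hydef
    have e1 : (0:ℝ) ≤ x - (N:ℝ)⁻¹ := by
      rw [← hxm i hi0]; positivity
    have e2 : x + (N:ℝ)⁻¹ ≤ 1 := by
      rw [← hxp i]; exact (hmemIcc (i+1) (by omega)).2
    have hOs : ∀ s ∈ Ioo (x - (N:ℝ)⁻¹) (x + (N:ℝ)⁻¹), (s, y) ∈ unitOSq := by
      intro s hs
      exact hOSqmem s y ⟨lt_of_le_of_lt e1 hs.1, lt_of_lt_of_le hs.2 e2⟩ hyIoo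
    have hsubIcc : ∀ s ∈ Ioo (x - (N:ℝ)⁻¹) (x + (N:ℝ)⁻¹), s ∈ Icc (0:ℝ) 1 := by
      intro s hs
      exact ⟨le_of_lt (lt_of_le_of_lt e1 hs.1), le_of_lt (lt_of_lt_of_le hs.2 e2)⟩
    have key := taylor_upper (fun s => w (s, y)) x ((N:ℝ)⁻¹) M hhpos
      (fun s hs k hk => (hReg4 (s, y) (hOs s hs)).1 k hk)
      (fun s hs => by
        have h3 := (hReg4 (s, y) (hOs s hs)).2.2
        have h4 := abs_nonneg (deriv^[4] (fun t => w (((s,y).1 : ℝ), t)) (s,y).2)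
        have h5 := le_abs_self (deriv^[4] (fun t => w (t, ((s,y).2 : ℝ))) (s,y).1)
        linarith)
      (by
        have hin : ContinuousWithinAt (fun s : ℝ => (s, y)) (Ioo (x - (N:ℝ)⁻¹) (x + (N:ℝ)⁻¹))
            (x + (N:ℝ)⁻¹) := (continuous_id.prodMk continuous_const).continuousWithinAt
        have hmemN : (x + (N:ℝ)⁻¹, y) ∈ unitSq := hSqmem _ _ (by
          rw [← hxp i]; exact hmemIcc (i+1) (by omega)) hyIcc
        exact ContinuousWithinAt.comp (hwc _ hmemN) hin
          (fun s hs => hSqmem s y (hsubIcc s hs) hyIcc))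
      (by
        have hin : ContinuousWithinAt (fun s : ℝ => (s, y)) (Ioo (x - (N:ℝ)⁻¹) (x + (N:ℝ)⁻¹))
            (x - (N:ℝ)⁻¹) := (continuous_id.prodMk continuous_const).continuousWithinAt
        have hmemN : (x - (N:ℝ)⁻¹, y) ∈ unitSq := hSqmem _ _ (by
          rw [← hxm i hi0]; exact hmemIcc (i-1) (by omega)) hyIcc
        exact ContinuousWithinAt.comp (hwc _ hmemN) hin
          (fun s hs => hSqmem s y (hsubIcc s hs) hyIcc))
    have hpd : pdx2 w (x, y) = deriv (deriv (fun s => w (s, y))) x := rfl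
    rw [hxp i, hxm i hi0, hpd]
    exact key
  have hTy : ∀ i j : ℕ, 0 < i → i < N → 0 < j → j < N →
      w ((i:ℝ)/N, ((j+1:ℕ):ℝ)/N) + w ((i:ℝ)/N, ((j-1:ℕ):ℝ)/N) - 2 * w ((i:ℝ)/N, (j:ℝ)/N)
        - (N:ℝ)⁻¹^2 * pdy2 w ((i:ℝ)/N, (j:ℝ)/N) ≤ M * ((N:ℝ)⁻¹)^4 / 12 := by
    intro i j hi0 hi1 hj0 hj1
    have hyIoo : (i:ℝ)/N ∈ Ioo (0:ℝ) 1 := hmemIoo i hi0 hi1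
    have hyIcc : (i:ℝ)/N ∈ Icc (0:ℝ) 1 := hmemIcc i (by omega)
    set x := (j:ℝ)/N with hxdef
    set y := (i:ℝ)/N with hydef
    have e1 : (0:ℝ) ≤ x - (N:ℝ)⁻¹ := by
      rw [← hxm j hj0]; positivity
    have e2 : x + (N:ℝ)⁻¹ ≤ 1 := by
      rw [← hxp j]; exact (hmemIcc (j+1) (by omega)).2
    have hOs : ∀ s ∈ Ioo (x - (N:ℝ)⁻¹) (x + (N:ℝ)⁻¹), (y, s) ∈ unitOSq := by
      intro s hs
      exact hOSqmem y s hyIoo ⟨lt_of_le_of_lt e1 hs.1, lt_of_lt_of_le hs.2 e2⟩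
    have hsubIcc : ∀ s ∈ Ioo (x - (N:ℝ)⁻¹) (x + (N:ℝ)⁻¹), s ∈ Icc (0:ℝ) 1 := by
      intro s hs
      exact ⟨le_of_lt (lt_of_le_of_lt e1 hs.1), le_of_lt (lt_of_lt_of_le hs.2 e2)⟩
    have key := taylor_upper (fun s => w (y, s)) x ((N:ℝ)⁻¹) M hhpos
      (fun s hs k hk => (hReg4 (y, s) (hOs s hs)).2.1 k hk)
      (fun s hs => by
        have h3 := (hReg4 (y, s) (hOs s hs)).2.2
        have h4 := abs_nonneg (deriv^[4] (fun t => w (t, ((y,s).2 : ℝ))) (y,s).1)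
        have h5 := le_abs_self (deriv^[4] (fun t => w (((y,s).1 : ℝ), t)) (y,s).2)
        linarith)
      (by
        have hin : ContinuousWithinAt (fun s : ℝ => (y, s)) (Ioo (x - (N:ℝ)⁻¹) (x + (N:ℝ)⁻¹))
            (x + (N:ℝ)⁻¹) := (continuous_const.prodMk continuous_id).continuousWithinAt
        have hmemN : (y, x + (N:ℝ)⁻¹) ∈ unitSq := hSqmem _ _ hyIcc (by
          rw [← hxp j]; exact hmemIcc (j+1) (by omega))
        exact ContinuousWithinAt.comp (hwc _ hmemN) hin
          (fun s hs => hSqmem y s hyIcc (hsubIcc s hs)))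
      (by
        have hin : ContinuousWithinAt (fun s : ℝ => (y, s)) (Ioo (x - (N:ℝ)⁻¹) (x + (N:ℝ)⁻¹))
            (x - (N:ℝ)⁻¹) := (continuous_const.prodMk continuous_id).continuousWithinAt
        have hmemN : (y, x - (N:ℝ)⁻¹) ∈ unitSq := hSqmem _ _ hyIcc (by
          rw [← hxm j hj0]; exact hmemIcc (j-1) (by omega))
        exact ContinuousWithinAt.comp (hwc _ hmemN) hin
          (fun s hs => hSqmem y s hyIcc (hsubIcc s hs)))
    have hpd : pdy2 w (y, x) = deriv (deriv (fun s => w (y, s))) x := rfl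
    rw [hxp j, hxm j hj0, hpd]
    exact key
  -- auxiliary grid functions
  set gval := Ft (1/2, 1/2) / 3 with hgval
  have hgval0 : 0 ≤ gval := by rw [hgval]; linarith
  set Qf : ℕ → ℕ → ℝ :=
    fun i j => ((i:ℝ)/N * (1 - (i:ℝ)/N) + (j:ℝ)/N * (1 - (j:ℝ)/N))/4 with hQf
  set wg : ℕ → ℕ → ℝ := fun i j => w ((i:ℝ)/N, (j:ℝ)/N) with hwg
  set U : ℕ → ℕ → ℝ := fun i j =>
    wg i j - Wt i j + (M/6) * (N:ℝ)⁻¹^2 * Qf i j - (gval/24) * (N:ℝ)⁻¹^2 * Vf c i j with hU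
  -- discrete Laplacian of Qf
  have hQlap : ∀ i j : ℕ, 0 < i → 0 < j →
      Qf (i+1) j + Qf (i-1) j + Qf i (j+1) + Qf i (j-1) - 4 * Qf i j = -(N:ℝ)⁻¹^2 := by
    intro i j h1 h2
    have h1' : (1:ℕ) ≤ i := h1
    have h2' : (1:ℕ) ≤ j := h2
    rw [hQf]
    push_cast [h1', h2']
    field_simp
    ring
  -- interior inequality for U
  have hIneq : ∀ i j, 0 < i → i < N → 0 < j → j < N →
      U (i+1) j + U (i-1) j + U i (j+1) + U i (j-1) ≤ 4 * U i j := by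
    intro i j hi0 hi1 hj0 hj1
    -- scheme part
    have hB : Wt (i+1) j + Wt (i-1) j + Wt i (j+1) + Wt i (j-1) - 4 * Wt i j
        = -(gam N i j * Ft ((i:ℝ)/N, (j:ℝ)/N)) * (N:ℝ)⁻¹^2 := by
      rw [sumnb N hNR Wt i j]
      have := hSch i j hi0 hi1 hj0 hj1
      have h2 : dx2 N Wt i j + dy2 N Wt i j = -(gam N i j * Ft ((i:ℝ)/N, (j:ℝ)/N)) := by
        linarith
      rw [h2]
    -- continuous part
    have hA : wg (i+1) j + wg (i-1) j + wg i (j+1) + wg i (j-1) - 4 * wg i j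
        ≤ -(Ft ((i:ℝ)/N, (j:ℝ)/N)) * (N:ℝ)⁻¹^2 + M * ((N:ℝ)⁻¹)^4 / 6 := by
      have t1 := hTx i j hi0 hi1 hj0 hj1
      have t2 := hTy i j hi0 hi1 hj0 hj1
      have hpde := hPDE ((i:ℝ)/N, (j:ℝ)/N)
        (hOSqmem _ _ (hmemIoo i hi0 hi1) (hmemIoo j hj0 hj1))
      have hw5 : wg (i+1) j = w (((i+1:ℕ):ℝ)/N, (j:ℝ)/N) := rfl
      have hw6 : wg (i-1) j = w (((i-1:ℕ):ℝ)/N, (j:ℝ)/N) := rfl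
      have hw7 : wg i (j+1) = w ((i:ℝ)/N, ((j+1:ℕ):ℝ)/N) := rfl
      have hw8 : wg i (j-1) = w ((i:ℝ)/N, ((j-1:ℕ):ℝ)/N) := rfl
      have hw9 : wg i j = w ((i:ℝ)/N, (j:ℝ)/N) := rfl
      rw [hw5, hw6, hw7, hw8, hw9]
      have e3 : (N:ℝ)⁻¹^2 * pdx2 w ((i:ℝ)/N, (j:ℝ)/N) + (N:ℝ)⁻¹^2 * pdy2 w ((i:ℝ)/N, (j:ℝ)/N)
          = -(Ft ((i:ℝ)/N, (j:ℝ)/N)) * (N:ℝ)⁻¹^2 := by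
        linear_combination (-(N:ℝ)⁻¹^2) * hpde
      nlinarith [t1, t2, e3]
    -- V part
    by_cases hcen : i = c ∧ j = c
    · -- center
      obtain ⟨hic, hjc⟩ := hcen
      have hgam : gam N i j = 2/3 := by
        rw [gam, if_pos ⟨by omega, by omega⟩]
      have hFtc : Ft ((i:ℝ)/N, (j:ℝ)/N) = Ft (1/2, 1/2) := by
        rw [hic, hjc, hcR]
      have hV : 4 * Vf c i j - 24
          ≤ Vf c (i+1) j + Vf c (i-1) j + Vf c i (j+1) + Vf c i (j-1) := by
        rw [hic, hjc]; exact V_cen c hc2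
      -- combine
      have hcomb : U (i+1) j + U (i-1) j + U i (j+1) + U i (j-1) - 4 * U i j
          = (wg (i+1) j + wg (i-1) j + wg i (j+1) + wg i (j-1) - 4 * wg i j)
            - (Wt (i+1) j + Wt (i-1) j + Wt i (j+1) + Wt i (j-1) - 4 * Wt i j)
            + (M/6) * (N:ℝ)⁻¹^2 *
              (Qf (i+1) j + Qf (i-1) j + Qf i (j+1) + Qf i (j-1) - 4 * Qf i j)
            - (gval/24) * (N:ℝ)⁻¹^2 *
              (Vf c (i+1) j + Vf c (i-1) j + Vf c i (j+1) + Vf c i (j-1) - 4 * Vf c i j) := by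
        rw [hU]; ring
      rw [← sub_nonpos, hcomb, hQlap i j hi0 hj0, hB, hgam, hFtc]
      have hVge : Vf c (i+1) j + Vf c (i-1) j + Vf c i (j+1) + Vf c i (j-1) - 4 * Vf c i j
          ≥ -24 := by linarith
      have hmul : (gval/24) * (N:ℝ)⁻¹^2 *
          (Vf c (i+1) j + Vf c (i-1) j + Vf c i (j+1) + Vf c i (j-1) - 4 * Vf c i j)
          ≥ (gval/24) * (N:ℝ)⁻¹^2 * (-24) := by
        apply mul_le_mul_of_nonneg_left hVge
          (mul_nonneg (by linarith : (0:ℝ) ≤ gval/24) hh2pos.le)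
      have hFg : Ft (1/2,1/2) = 3 * gval := by rw [hgval]; ring
      rw [hFtc] at hA
      nlinarith [hA, hmul, hh2pos]
    · -- non-center
      have hgam : gam N i j = 1 := by
        rw [gam, if_neg (by omega)]
      have hV := V_int c hc2 i j hi0 (by omega) hj0 (by omega) (by omega)
      have hcomb : U (i+1) j + U (i-1) j + U i (j+1) + U i (j-1) - 4 * U i j
          = (wg (i+1) j + wg (i-1) j + wg i (j+1) + wg i (j-1) - 4 * wg i j)
            - (Wt (i+1) j + Wt (i-1) j + Wt i (j+1) + Wt i (j-1) - 4 * Wt i j)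
            + (M/6) * (N:ℝ)⁻¹^2 *
              (Qf (i+1) j + Qf (i-1) j + Qf i (j+1) + Qf i (j-1) - 4 * Qf i j)
            - (gval/24) * (N:ℝ)⁻¹^2 *
              (Vf c (i+1) j + Vf c (i-1) j + Vf c i (j+1) + Vf c i (j-1) - 4 * Vf c i j) := by
        rw [hU]; ring
      rw [← sub_nonpos, hcomb, hQlap i j hi0 hj0, hB, hgam]
      have hVge : Vf c (i+1) j + Vf c (i-1) j + Vf c i (j+1) + Vf c i (j-1) - 4 * Vf c i j
          ≥ 0 := by linarith
      have hmul : (gval/24) * (N:ℝ)⁻¹^2 *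
          (Vf c (i+1) j + Vf c (i-1) j + Vf c i (j+1) + Vf c i (j-1) - 4 * Vf c i j)
          ≥ 0 := mul_nonneg (mul_nonneg (by linarith : (0:ℝ) ≤ gval/24) hh2pos.le)
            (by linarith)
      nlinarith [hA, hmul, hh2pos]
  -- boundary inequality for U
  have hBd : ∀ i j, i ≤ N → j ≤ N → (i = 0 ∨ i = N ∨ j = 0 ∨ j = N) → 0 ≤ U i j := by
    intro i j hi hj hb
    have hWt0 : Wt i j = 0 := hWbd i j hi hj hb
    have hw0 : wg i j = 0 := by
      rw [hwg]
      apply hbdry _ (hSqmem _ _ (hmemIcc i hi) (hmemIcc j hj))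
      rcases hb with h | h | h | h
      · left; subst h; simp
      · right; left; subst h; exact div_self hNR.ne'
      · right; right; left; subst h; simp
      · right; right; right; subst h; exact div_self hNR.ne'
    have hQ0 : 0 ≤ Qf i j := by
      rw [hQf]
      have h1 := hmemIcc i hi
      have h2 := hmemIcc j hj
      have q1 : 0 ≤ (i:ℝ)/N * (1 - (i:ℝ)/N) := mul_nonneg h1.1 (by linarith [h1.2])
      have q2 : 0 ≤ (j:ℝ)/N * (1 - (j:ℝ)/N) := mul_nonneg h2.1 (by linarith [h2.2])
      linarith
    have hV0 : Vf c i j ≤ 0 := V_bd c hc2 i j (by omega) (by omega) (by omega)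
    have : 0 ≤ - ((gval/24) * (N:ℝ)⁻¹^2 * Vf c i j) := by
      have := mul_nonpos_of_nonneg_of_nonpos (by positivity : (0:ℝ) ≤ (gval/24) * (N:ℝ)⁻¹^2) hV0
      linarith
    rw [hU]
    simp only
    nlinarith [mul_nonneg (mul_nonneg (by linarith : (0:ℝ) ≤ M/6) hh2pos.le) hQ0]
  -- apply the maximum principle
  have hUc := maxprin N U hIneq hBd c c (by omega) (by omega)
  -- unfold at the center
  have hVcc : (1/2) * Real.log N ≤ Vf c c c := by
    have := V_val c hc2
    have hNN : ((2*c : ℕ) : ℝ) = (N:ℝ) := by exact_mod_cast congrArg (Nat.cast : ℕ → ℝ) hNc.symm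
    rw [hNN] at this
    exact this
  have hQcc : Qf c c = 1/8 := by
    rw [hQf]; simp only; rw [hcR]; norm_num
  have hwcc : wg c c = w (1/2, 1/2) := by
    rw [hwg]; simp only; rw [hcR]
  have hUcc : U c c = w (1/2,1/2) - Wt c c + (M/6) * (N:ℝ)⁻¹^2 * (1/8)
      - (gval/24) * (N:ℝ)⁻¹^2 * Vf c c c := by
    rw [hU]; simp only; rw [hwcc, hQcc]
  rw [hUcc] at hUc
  have hlogN : 0 ≤ Real.log N := Real.log_nonneg (by exact_mod_cast (by omega : 1 ≤ N))
  have hVmul : (gval/24) * (N:ℝ)⁻¹^2 * ((1/2) * Real.log N)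
      ≤ (gval/24) * (N:ℝ)⁻¹^2 * Vf c c c :=
    mul_le_mul_of_nonneg_left hVcc
      (mul_nonneg (by linarith : (0:ℝ) ≤ gval/24) hh2pos.le)
  have hFg : gval = Ft (1/2,1/2) / 3 := hgval
  -- conclude
  have hfinal : (1/144) * (N:ℝ)⁻¹^2 * Real.log N * Ft (1/2,1/2) - M * (N:ℝ)⁻¹^2
      ≤ w (1/2,1/2) - Wt c c := by
    have h48 : (M/6) * (N:ℝ)⁻¹^2 * (1/8) ≤ M * (N:ℝ)⁻¹^2 := by nlinarith [hh2pos]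
    rw [hgval] at hUc hVmul
    nlinarith [hUc, hVmul, hh2pos]
  convert hfinal using 3 <;> norm_num
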